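/- Let G be a finite simple graph on n vertices with n ≥ 3, and let φ be an automorphism of the Mycielskian μ(G). If φ maps the root w to an original vertex of μ(G), then G has no dominating vertex. -/

import Mathlib

open SimpleGraph

/-- The generalized Mycielskian `μ_t(G)`: levels `0,…,t` of copies of `V(G)`
plus a root `none`. Level-0 vertices are the original vertices. -/
def genMyc {V : Type*} (G : SimpleGraph V) (t : ℕ) :
    SimpleGraph (Option (Fin (t + 1) × V)) :=
  SimpleGraph.fromRel fun a b =>
    match a, b with
    | some (s, i), some (s', j) =>
        ((s : ℕ) = 0 ∧ (s' : ℕ) = 0 ∧ G.Adj i j) ∨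
        ((s' : ℕ) = (s : ℕ) + 1 ∧ G.Adj i j)
    | some (s, _), none => (s : ℕ) = t
    | _, _ => False

/-- The (traditional) Mycielskian `μ(G)`. -/
def myc {V : Type*} (G : SimpleGraph V) : SimpleGraph (Option (Fin 2 × V)) :=
  genMyc G 1

/-- The star `K_{1,m}` with center `0` and `m` leaves. -/
def starG (m : ℕ) : SimpleGraph (Fin (m + 1)) :=
  SimpleGraph.fromRel fun a _ => a = 0

/-- A `d`-coloring is distinguishing if only the trivial automorphism preserves it. -/
def IsDistinguishing {V : Type*} (H : SimpleGraph V) (d : ℕ) (c : V → Fin d) : Prop :=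
  ∀ φ : H ≃g H, (∀ v, c (φ v) = c v) → ∀ v, φ v = v

/-- The distinguishing number of a graph. -/
noncomputable def distNum {V : Type*} (H : SimpleGraph V) : ℕ :=
  sInf {d | ∃ c : V → Fin d, IsDistinguishing H d c}

section Aux
variable {V : Type*} {G : SimpleGraph V} {i j v : V}

lemma myc_adj_some {s : Fin 2} : (myc G).Adj (some (0, v)) (some (s, j)) ↔ G.Adj v j := by
  constructor
  · rintro ⟨hne, h | h⟩
    · rcases h with (⟨-,-,h⟩|⟨-,h⟩) <;> exact h
    · rcases h with (⟨-,-,h⟩|⟨hs,h⟩)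
      · exact h.symm
      · simp at hs
  · intro hadj
    refine ⟨by simp [hadj.ne], Or.inl ?_⟩
    fin_cases s
    · exact Or.inl ⟨rfl, rfl, hadj⟩
    · exact Or.inr ⟨rfl, hadj⟩

lemma myc_adj_none {c : Option (Fin 2 × V)} : (myc G).Adj none c ↔ ∃ i, c = some (1, i) := by
  constructor
  · rintro ⟨hne, h | h⟩
    · exact absurd h (by simp [myc, genMyc])
    · match c with
      | none => simp at hne
      | some (s, i) =>
        refine ⟨i, ?_⟩
        have hs : (s : ℕ) = 1 := h
        have : s = 1 := by omega
        rw [this]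
  · rintro ⟨i, rfl⟩
    exact ⟨by simp, Or.inr rfl⟩

lemma myc_not_adj_shadow : ¬ (myc G).Adj (some (1, i)) (some (1, j)) := by
  rintro ⟨hne, h | h⟩ <;> rcases h with (⟨h1,-⟩|⟨h1,-⟩) <;> simp at h1

lemma card_nbhd_none [Fintype V] : Nat.card ((myc G).neighborSet none) = Fintype.card V := by
  rw [← Nat.card_eq_fintype_card]
  refine (Nat.card_eq_of_bijective (fun i : V => (⟨some (1, i), (myc_adj_none (G := G)).mpr ⟨i, rfl⟩⟩ :
    (myc G).neighborSet none)) ⟨?_, ?_⟩).symm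
  · intro i j hij
    simpa using congrArg Subtype.val hij
  · rintro ⟨c, hc⟩
    obtain ⟨i, rfl⟩ := myc_adj_none.mp hc
    exact ⟨i, rfl⟩

lemma card_nbhd_orig [Fintype V] : Nat.card ((myc G).neighborSet (some (0, v)))
    = 2 * Nat.card {j // G.Adj v j} := by
  have e : (Fin 2 × {j // G.Adj v j}) ≃ ((myc G).neighborSet (some (0, v))) := by
    refine Equiv.ofBijective (fun p => ⟨some (p.1, p.2.1), myc_adj_some.mpr p.2.2⟩) ⟨?_, ?_⟩
    · rintro ⟨s, j, hj⟩ ⟨s', j', hj'⟩ hp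
      replace hp := congrArg Subtype.val hp
      simp only [Subtype.mk.injEq, Option.some.injEq, Prod.mk.injEq] at hp
      simp [Prod.ext_iff, hp.1, hp.2]
    · rintro ⟨c, hc⟩
      match c with
      | none => exact absurd hc (by rintro ⟨-, (h|h)⟩ <;> simp [myc, genMyc] at h)
      | some (s, j) => exact ⟨⟨s, j, myc_adj_some.mp hc⟩, rfl⟩
  rw [← Nat.card_congr e, Nat.card_prod]
  simp [Nat.card_eq_fintype_card]

end Aux

theorem stmt_0 {V : Type*} [Fintype V] (G : SimpleGraph V)
    (hn : 3 ≤ Fintype.card V) (φ : myc G ≃g myc G) (v : V)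
    (h : φ none = some (0, v)) :
    ¬ ∃ x : V, ∀ y : V, y ≠ x → G.Adj x y := by
  classical
  rintro ⟨x, hx⟩
  have e := Nat.card_congr (φ.mapNeighborSet none)
  rw [h] at e
  have key : Fintype.card V = 2 * Nat.card {j // G.Adj v j} := by
    rw [← card_nbhd_none (G := G), e, card_nbhd_orig]
  by_cases hvx : v = x
  · subst hvx
    have e2 : Nat.card {j // G.Adj v j} = Nat.card {j // ¬ (j = v)} :=
      Nat.card_congr (Equiv.subtypeEquivRight fun j =>
        ⟨fun hj => hj.ne.symm, fun hj => hx j hj⟩)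
    rw [e2, Nat.card_eq_fintype_card, Fintype.card_subtype_compl,
      Fintype.card_subtype_eq] at key
    omega
  · have hd : 1 < Nat.card {j // G.Adj v j} := by omega
    have : Nontrivial {j // G.Adj v j} := Finite.one_lt_card_iff_nontrivial.mp hd
    obtain ⟨⟨j1, hj1⟩, ⟨j2, hj2⟩, hne⟩ := this
    have hne' : j1 ≠ j2 := by simpa [Subtype.ext_iff] using hne
    obtain ⟨j, hj, hjx⟩ : ∃ j, G.Adj v j ∧ j ≠ x := by
      rcases eq_or_ne j1 x with rfl | h1
      · exact ⟨j2, hj2, hne'.symm⟩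
      · exact ⟨j1, hj1, h1⟩
    have ha : (myc G).Adj (some (0, v)) (some (0, x)) := myc_adj_some.mpr (hx v hvx).symm
    have hb : (myc G).Adj (some (0, v)) (some (1, j)) := myc_adj_some.mpr hj
    have hab : (myc G).Adj (some (0, x)) (some (1, j)) := myc_adj_some.mpr (hx j hjx)
    have hnone : φ.symm (some (0, v)) = none := by rw [← h]; exact φ.symm_apply_apply none
    have h1 := φ.symm.map_adj_iff.mpr ha
    rw [hnone] at h1
    obtain ⟨i1, e1⟩ := myc_adj_none.mp h1
    have h2 := φ.symm.map_adj_iff.mpr hb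
    rw [hnone] at h2
    obtain ⟨i2, e2⟩ := myc_adj_none.mp h2
    have h3 := φ.symm.map_adj_iff.mpr hab
    rw [e1, e2] at h3
    exact myc_not_adj_shadow h3
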